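/- Let g be a finite simple graph, k a natural number, S ⊆ V(g) nonempty, u ∈ S, v ∈ V(g)\S, and set S′ = S ∪ {v} with |Ē(S′)| ≤ k. Over W = V(g)\S′ define cn = |{w ∈ W : w is adjacent to both u and v}|, cnon = |{w ∈ W : w is adjacent to neither u nor v}|, and xn = |{w ∈ W : w is adjacent to exactly one of u, v}|. Then every k-defective clique C of g with S′ ⊆ C ⊆ V(g) satisfies |C| ≤ |S′| + cn + min(k − |Ē(S′)|, xn) + min(cnon, max(0, ⌊(k − |Ē(S′)| − xn)/2⌋)), where the arithmetic is over the integers (correctness of the second-order reduction rule RR4). -/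
import Mathlib


open Finset

variable {V : Type*} [Fintype V] [DecidableEq V]

/-- The set of non-edges of `S`: unordered pairs of distinct vertices of `S`
that are not adjacent in `G`. -/
def nonEdges (G : SimpleGraph V) [DecidableRel G.Adj] (S : Finset V) : Finset (Sym2 V) :=
  ((S ×ˢ S).filter fun p => p.1 ≠ p.2 ∧ ¬ G.Adj p.1 p.2).image fun p => s(p.1, p.2)

/-- Over `W = V(g) \ (S ∪ {v})`, the number of common neighbors of `u` and `v`. -/
def cn (G : SimpleGraph V) [DecidableRel G.Adj] (S : Finset V) (u v : V) : ℕ :=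
  ((Finset.univ \ insert v S).filter fun w => G.Adj u w ∧ G.Adj v w).card

/-- Over `W = V(g) \ (S ∪ {v})`, the number of common non-neighbors of `u` and `v`. -/
def cnon (G : SimpleGraph V) [DecidableRel G.Adj] (S : Finset V) (u v : V) : ℕ :=
  ((Finset.univ \ insert v S).filter fun w => ¬ G.Adj u w ∧ ¬ G.Adj v w).card

/-- Over `W = V(g) \ (S ∪ {v})`, the number of vertices adjacent to exactly one
of `u` and `v`. -/
def xn (G : SimpleGraph V) [DecidableRel G.Adj] (S : Finset V) (u v : V) : ℕ :=
  ((Finset.univ \ insert v S).filter fun w =>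
    (G.Adj u w ∧ ¬ G.Adj v w) ∨ (¬ G.Adj u w ∧ G.Adj v w)).card

lemma mem_nonEdges {G : SimpleGraph V} [DecidableRel G.Adj] {T : Finset V} {a b : V} :
    s(a, b) ∈ nonEdges G T ↔ a ∈ T ∧ b ∈ T ∧ a ≠ b ∧ ¬ G.Adj a b := by
  unfold nonEdges
  simp only [mem_image, mem_filter, mem_product, Prod.exists]
  constructor
  · rintro ⟨p1, p2, ⟨⟨h1, h2⟩, hne, hadj⟩, heq⟩
    rw [Sym2.eq_iff] at heq
    rcases heq with ⟨rfl, rfl⟩ | ⟨rfl, rfl⟩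
    · exact ⟨h1, h2, hne, hadj⟩
    · exact ⟨h2, h1, hne.symm, fun h => hadj h.symm⟩
  · rintro ⟨ha, hb, hne, hadj⟩
    exact ⟨a, b, ⟨⟨ha, hb⟩, hne, hadj⟩, rfl⟩

lemma nonEdges_mono {G : SimpleGraph V} [DecidableRel G.Adj] {T T' : Finset V}
    (h : T ⊆ T') : nonEdges G T ⊆ nonEdges G T' :=
  image_subset_image (filter_subset_filter _ (product_subset_product h h))

lemma card_image_pair {c : V} {T : Finset V} (hT : ∀ w ∈ T, w ≠ c) :
    (T.image fun w => s(w, c)).card = T.card := by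
  apply card_image_of_injOn
  intro w hw w' hw' heq
  rw [Sym2.eq_iff] at heq
  rcases heq with ⟨h, _⟩ | ⟨h, _⟩
  · exact h
  · exact absurd h (hT w hw)

lemma disj_image_ne {c c' : V} {T T' : Finset V} (hcc : c ≠ c') (hT : ∀ w ∈ T, w ≠ c') :
    Disjoint (T.image fun w => s(w, c)) (T'.image fun w => s(w, c')) := by
  rw [disjoint_left]
  rintro e he he'
  obtain ⟨w, hw, rfl⟩ := mem_image.mp he
  obtain ⟨w', hw', heq⟩ := mem_image.mp he'
  rw [Sym2.eq_iff] at heq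
  rcases heq with ⟨_, h⟩ | ⟨_, h⟩
  · exact hcc h.symm
  · exact hT w hw h.symm

lemma disj_image_same {c : V} {T T' : Finset V} (hTT : Disjoint T T')
    (hT : ∀ w ∈ T, w ≠ c) :
    Disjoint (T.image fun w => s(w, c)) (T'.image fun w => s(w, c)) := by
  rw [disjoint_left]
  rintro e he he'
  obtain ⟨w, hw, rfl⟩ := mem_image.mp he
  obtain ⟨w', hw', heq⟩ := mem_image.mp he'
  rw [Sym2.eq_iff] at heq
  rcases heq with ⟨h, _⟩ | ⟨_, h⟩
  · exact (disjoint_left.mp hTT hw (h ▸ hw')).elim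
  · exact hT w hw h.symm

lemma disj_nonEdges_image {G : SimpleGraph V} [DecidableRel G.Adj] {S' : Finset V}
    {c : V} {T : Finset V} (hT : ∀ w ∈ T, w ∉ S') :
    Disjoint (nonEdges G S') (T.image fun w => s(w, c)) := by
  rw [disjoint_right]
  rintro e he he'
  obtain ⟨w, hw, rfl⟩ := mem_image.mp he
  exact hT w hw (mem_nonEdges.mp he').1

/-- Correctness of the second-order reduction rule RR4: with `S′ = S ∪ {v}` and
`|Ē(S′)| ≤ k`, every `k`-defective clique `C ⊇ S′` satisfies
`|C| ≤ |S′| + cn + min(k − |Ē(S′)|, xn) + min(cnon, max(0, ⌊(k − |Ē(S′)| − xn)/2⌋))`,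
the arithmetic being over the integers. -/
theorem rr4_correct (G : SimpleGraph V) [DecidableRel G.Adj] (k : ℕ)
    (S : Finset V) (hS : S.Nonempty) (u : V) (hu : u ∈ S) (v : V) (hv : v ∉ S)
    (hS' : (nonEdges G (insert v S)).card ≤ k)
    (C : Finset V) (hSC : insert v S ⊆ C) (hC : (nonEdges G C).card ≤ k) :
    (C.card : ℤ) ≤ ((insert v S).card : ℤ) + (cn G S u v : ℤ)
      + min ((k : ℤ) - ((nonEdges G (insert v S)).card : ℤ)) (xn G S u v : ℤ)
      + min ((cnon G S u v : ℤ))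
          (max 0 (((k : ℤ) - ((nonEdges G (insert v S)).card : ℤ) - (xn G S u v : ℤ)) / 2)) := by
  classical
  have huS' : u ∈ insert v S := mem_insert_of_mem hu
  have hvS' : v ∈ insert v S := mem_insert_self v S
  have huv : u ≠ v := fun h => hv (h ▸ hu)
  set D := C \ insert v S with hDdef
  have hDfacts : ∀ w ∈ D, w ∈ C ∧ w ∉ insert v S ∧ w ≠ u ∧ w ≠ v := by
    intro w hw
    rw [hDdef, mem_sdiff] at hw
    exact ⟨hw.1, hw.2, fun h => hw.2 (h ▸ huS'), fun h => hw.2 (h ▸ hvS')⟩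
  set A := D.filter (fun w => G.Adj u w ∧ G.Adj v w) with hAdef
  set X1 := D.filter (fun w => G.Adj u w ∧ ¬ G.Adj v w) with hX1def
  set X2 := D.filter (fun w => ¬ G.Adj u w ∧ G.Adj v w) with hX2def
  set X := D.filter (fun w => (G.Adj u w ∧ ¬ G.Adj v w) ∨ (¬ G.Adj u w ∧ G.Adj v w)) with hXdef
  set N := D.filter (fun w => ¬ G.Adj u w ∧ ¬ G.Adj v w) with hNdef
  have hDW : D ⊆ univ \ insert v S := sdiff_subset_sdiff (subset_univ C) (Subset.refl _)
  have hAcn : A.card ≤ cn G S u v := card_le_card (filter_subset_filter _ hDW)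
  have hXxn : X.card ≤ xn G S u v := card_le_card (filter_subset_filter _ hDW)
  have hNcnon : N.card ≤ cnon G S u v := card_le_card (filter_subset_filter _ hDW)
  -- partition of D
  have hX12 : X = X1 ∪ X2 := by
    rw [hXdef, hX1def, hX2def, ← filter_or]
  have hdX12 : Disjoint X1 X2 := by
    rw [disjoint_left]
    intro w hw1 hw2
    rw [hX1def, mem_filter] at hw1
    rw [hX2def, mem_filter] at hw2
    tauto
  have hXcard : X.card = X1.card + X2.card := by
    rw [hX12, card_union_of_disjoint hdX12]
  have hXN : X ∪ N = D.filter fun w => ¬ (G.Adj u w ∧ G.Adj v w) := by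
    rw [hXdef, hNdef, ← filter_or]
    apply filter_congr
    intro w _
    constructor <;> intro h <;> tauto
  have hdXN : Disjoint X N := by
    rw [disjoint_left]
    intro w hwX hwN
    rw [hXdef, mem_filter] at hwX
    rw [hNdef, mem_filter] at hwN
    tauto
  have hpart : A.card + (X.card + N.card) = D.card := by
    have h1 : A.card + (D.filter fun w => ¬ (G.Adj u w ∧ G.Adj v w)).card = D.card :=
      card_filter_add_card_filter_not _
    rw [← card_union_of_disjoint hdXN, hXN]
    exact h1
  have hCD : C.card = (insert v S).card + D.card := by
    have hle := card_le_card hSC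
    rw [hDdef, card_sdiff_of_subset hSC]
    omega
  -- counting non-edges
  set EX1 := X1.image (fun w => s(w, v)) with hEX1def
  set EX2 := X2.image (fun w => s(w, u)) with hEX2def
  set ENu := N.image (fun w => s(w, u)) with hENudef
  set ENv := N.image (fun w => s(w, v)) with hENvdef
  have hX1v : ∀ w ∈ X1, w ≠ v := fun w hw => (hDfacts w (mem_of_mem_filter w hw)).2.2.2
  have hX1u : ∀ w ∈ X1, w ≠ u := fun w hw => (hDfacts w (mem_of_mem_filter w hw)).2.2.1
  have hX2v : ∀ w ∈ X2, w ≠ v := fun w hw => (hDfacts w (mem_of_mem_filter w hw)).2.2.2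
  have hX2u : ∀ w ∈ X2, w ≠ u := fun w hw => (hDfacts w (mem_of_mem_filter w hw)).2.2.1
  have hNv : ∀ w ∈ N, w ≠ v := fun w hw => (hDfacts w (mem_of_mem_filter w hw)).2.2.2
  have hNu : ∀ w ∈ N, w ≠ u := fun w hw => (hDfacts w (mem_of_mem_filter w hw)).2.2.1
  have hdX1N : Disjoint X1 N := by
    rw [disjoint_left]; intro w h1 h2
    rw [hX1def, mem_filter] at h1; rw [hNdef, mem_filter] at h2; tauto
  have hdX2N : Disjoint X2 N := by
    rw [disjoint_left]; intro w h1 h2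
    rw [hX2def, mem_filter] at h1; rw [hNdef, mem_filter] at h2; tauto
  -- pairwise disjointness of the four image sets
  have d12 : Disjoint EX1 EX2 := disj_image_ne huv.symm hX1u
  have d1u : Disjoint EX1 ENu := disj_image_ne huv.symm hX1u
  have d1v : Disjoint EX1 ENv := disj_image_same hdX1N hX1v
  have d2u : Disjoint EX2 ENu := disj_image_same hdX2N hX2u
  have d2v : Disjoint EX2 ENv := disj_image_ne huv hX2v
  have duv : Disjoint ENu ENv := disj_image_ne huv hNv
  have hnotS' : ∀ (T : Finset V), T ⊆ D → ∀ w ∈ T, w ∉ insert v S :=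
    fun T hT w hw => (hDfacts w (hT hw)).2.1
  have d01 : Disjoint (nonEdges G (insert v S)) EX1 :=
    disj_nonEdges_image (hnotS' X1 (filter_subset _ _))
  have d02 : Disjoint (nonEdges G (insert v S)) EX2 :=
    disj_nonEdges_image (hnotS' X2 (filter_subset _ _))
  have d0u : Disjoint (nonEdges G (insert v S)) ENu :=
    disj_nonEdges_image (hnotS' N (filter_subset _ _))
  have d0v : Disjoint (nonEdges G (insert v S)) ENv :=
    disj_nonEdges_image (hnotS' N (filter_subset _ _))
  -- the union is contained in nonEdges G C
  have hsub : nonEdges G (insert v S) ∪ (EX1 ∪ (EX2 ∪ (ENu ∪ ENv))) ⊆ nonEdges G C := by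
    intro e he
    simp only [mem_union] at he
    rcases he with he | he | he | he | he
    · exact nonEdges_mono hSC he
    · obtain ⟨w, hw, rfl⟩ := mem_image.mp he
      obtain ⟨hwD, hPw⟩ := mem_filter.mp hw
      obtain ⟨hwC, _, _, hwv⟩ := hDfacts w hwD
      exact mem_nonEdges.mpr ⟨hwC, hSC hvS', hwv, fun h => hPw.2 h.symm⟩
    · obtain ⟨w, hw, rfl⟩ := mem_image.mp he
      obtain ⟨hwD, hPw⟩ := mem_filter.mp hw
      obtain ⟨hwC, _, hwu, _⟩ := hDfacts w hwD
      exact mem_nonEdges.mpr ⟨hwC, hSC huS', hwu, fun h => hPw.1 h.symm⟩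
    · obtain ⟨w, hw, rfl⟩ := mem_image.mp he
      obtain ⟨hwD, hPw⟩ := mem_filter.mp hw
      obtain ⟨hwC, _, hwu, _⟩ := hDfacts w hwD
      exact mem_nonEdges.mpr ⟨hwC, hSC huS', hwu, fun h => hPw.1 h.symm⟩
    · obtain ⟨w, hw, rfl⟩ := mem_image.mp he
      obtain ⟨hwD, hPw⟩ := mem_filter.mp hw
      obtain ⟨hwC, _, _, hwv⟩ := hDfacts w hwD
      exact mem_nonEdges.mpr ⟨hwC, hSC hvS', hwv, fun h => hPw.2 h.symm⟩
  -- its cardinality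
  have hucard : (nonEdges G (insert v S) ∪ (EX1 ∪ (EX2 ∪ (ENu ∪ ENv)))).card
      = (nonEdges G (insert v S)).card + (X1.card + (X2.card + (N.card + N.card))) := by
    rw [card_union_of_disjoint (by
        simp only [disjoint_union_right]
        exact ⟨d01, d02, d0u, d0v⟩),
      card_union_of_disjoint (by
        simp only [disjoint_union_right]
        exact ⟨d12, d1u, d1v⟩),
      card_union_of_disjoint (by
        simp only [disjoint_union_right]
        exact ⟨d2u, d2v⟩),
      card_union_of_disjoint duv,
      hEX1def, hEX2def, hENudef, hENvdef,
      card_image_pair hX1v, card_image_pair hX2u, card_image_pair hNu, card_image_pair hNv]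
  have hkey : (nonEdges G (insert v S)).card + (X1.card + (X2.card + (N.card + N.card))) ≤ k := by
    rw [← hucard]
    exact le_trans (card_le_card hsub) hC
  omega
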